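/- Let n ∈ ℕ, let ((λ_k^1,…,λ_k^n))_{k∈ℕ} be a sequence in ℂ^n with Re λ_k^j > 0 for all k ∈ ℕ and j = 1,…,n, and let 1 ≤ s ≤ n and 1 ≤ j_1 < ⋯ < j_s ≤ n. If ((λ_k^1,…,λ_k^n))_{k∈ℕ} is a uniqueness sequence for the n-dimensional Laplace transform, then ((λ_k^{j_1},…,λ_k^{j_s}))_{k∈ℕ} is a uniqueness sequence for the s-dimensional Laplace transform. -/

import Mathlib

open MeasureTheory Filter Set
open Topology

noncomputable section

/-- Partial Laplace integral of `f : [0,∞) → ℂ` at `l` up to time `t`. -/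
def lapPartial (f : ℝ → ℂ) (l : ℂ) (t : ℝ) : ℂ :=
  ∫ s in Set.Ioc (0:ℝ) t, Complex.exp (-(l * s)) * f s

/-- The Laplace transform of `f` at `l` exists and equals `F`. -/
def HasLaplace (f : ℝ → ℂ) (l : ℂ) (F : ℂ) : Prop :=
  Filter.Tendsto (lapPartial f l) Filter.atTop (nhds F)

/-- The abscissa of convergence of the Laplace transform of `f`, as an extended real. -/
def laplaceAbs (f : ℝ → ℂ) : EReal :=
  sInf {x : EReal | ∃ ω : ℝ, x = (ω : EReal) ∧ ∀ l : ℂ, ω < l.re → ∃ F, HasLaplace f l F}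

/-- `lam` is a uniqueness sequence for the one-dimensional Laplace transform. -/
def IsUniquenessSeq (lam : ℕ → ℂ) : Prop :=
  ∀ f : ℝ → ℂ, MeasureTheory.LocallyIntegrableOn f (Set.Ici 0) →
    (∀ k, laplaceAbs f < (((lam k).re : ℝ) : EReal)) →
    (∀ k, HasLaplace f (lam k) 0) →
    ∀ᵐ t : ℝ, 0 ≤ t → f t = 0

/-- Partial `n`-dimensional Laplace integral of `f : [0,∞)^n → ℂ` at `l` over the box `[0,t]`. -/
def mLapPartial (n : ℕ) (f : (Fin n → ℝ) → ℂ) (l : Fin n → ℂ) (t : Fin n → ℝ) : ℂ :=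
  ∫ s in Set.pi Set.univ (fun i => Set.Ioc (0:ℝ) (t i)),
    Complex.exp (-(∑ i, l i * (s i))) * f s

/-- The `n`-dimensional Laplace transform of `f` at `l` exists (as the iterated limit
`t₁ → ∞, …, tₙ → ∞` of the partial integrals) and equals `F`. -/
def HasMLaplace (n : ℕ) (f : (Fin n → ℝ) → ℂ) (l : Fin n → ℂ) (F : ℂ) : Prop :=
  Filter.Tendsto (mLapPartial n f l) Filter.atTop (nhds F)

/-- `Ω(f)`: the region of convergence of the `n`-dimensional Laplace integral. -/
def mOmega (n : ℕ) (f : (Fin n → ℝ) → ℂ) : Set (Fin n → ℂ) :=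
  {l | ∃ F, HasMLaplace n f l F}

/-- `Ω_b(f)`: the set of `l` for which the partial Laplace integrals are bounded. -/
def mOmegaB (n : ℕ) (f : (Fin n → ℝ) → ℂ) : Set (Fin n → ℂ) :=
  {l | Bornology.IsBounded (mLapPartial n f l '' {t | ∀ i, 0 ≤ t i})}

/-- A countable family `lam : K → ℂⁿ` is a uniqueness sequence for the `n`-dimensional
Laplace transform. -/
def IsMUniquenessFamily (n : ℕ) {K : Type} [Countable K] (lam : K → Fin n → ℂ) : Prop :=
  ∀ f : (Fin n → ℝ) → ℂ,
    MeasureTheory.LocallyIntegrableOn f {t | ∀ i, 0 ≤ t i} →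
    (∃ ω : Fin n → EReal, (∀ j, ω j ≠ ⊤) ∧
      {l : Fin n → ℂ | ∀ j, ω j < (((l j).re : ℝ) : EReal)} ⊆ mOmegaB n f ∩ mOmega n f ∧
      ∀ k j, ω j < ((((lam k j).re : ℝ)) : EReal)) →
    (∀ k, HasMLaplace n f (lam k) 0) →
    ∀ᵐ t : Fin n → ℝ, (∀ i, 0 ≤ t i) → f t = 0


lemma bInt_eq (c : ℂ) (hc : c ≠ 0) {T : ℝ} (hT : 0 ≤ T) :
    (∫ u in Set.Ioc (0:ℝ) T, Complex.exp (-(c * u))) = (1 - Complex.exp (-(c * T))) / c := by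
  rw [← intervalIntegral.integral_of_le hT]
  have h1 : ∀ u : ℝ, Complex.exp (-(c * u)) = Complex.exp ((-c) * u) := by
    intro u; rw [neg_mul]
  simp_rw [h1]
  rw [integral_exp_mul_complex (neg_ne_zero.mpr hc)]
  rw [Complex.ofReal_zero, mul_zero, Complex.exp_zero, neg_mul, div_neg]
  field_simp
  ring

lemma bInt_norm_le (c : ℂ) (hc : 0 < c.re) (T : ℝ) :
    ‖∫ u in Set.Ioc (0:ℝ) T, Complex.exp (-(c * u))‖ ≤ 2 / ‖c‖ := by
  have hc0 : c ≠ 0 := fun h => by simp [h] at hc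
  rcases le_or_gt 0 T with hT | hT
  · rw [bInt_eq c hc0 hT, norm_div]
    have he : ‖Complex.exp (-(c * T))‖ ≤ 1 := by
      rw [Complex.norm_exp, Real.exp_le_one_iff]
      simp only [Complex.neg_re, Complex.mul_re, Complex.ofReal_re, Complex.ofReal_im, mul_zero,
        sub_zero, neg_nonpos]
      positivity
    have : ‖(1 : ℂ) - Complex.exp (-(c * T))‖ ≤ 2 := by
      calc ‖(1 : ℂ) - Complex.exp (-(c * T))‖ ≤ ‖(1:ℂ)‖ + ‖Complex.exp (-(c * T))‖ :=
            norm_sub_le _ _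
        _ ≤ 2 := by rw [norm_one]; linarith
    gcongr
  · rw [Set.Ioc_eq_empty (by linarith), Measure.restrict_empty, integral_zero_measure]
    simp
    positivity

lemma bInt_tendsto (c : ℂ) (hc : 0 < c.re) :
    Tendsto (fun T : ℝ => ∫ u in Set.Ioc (0:ℝ) T, Complex.exp (-(c * u))) atTop (𝓝 (1 / c)) := by
  have hc0 : c ≠ 0 := fun h => by simp [h] at hc
  have h1 : Tendsto (fun T : ℝ => Complex.exp (-(c * T))) atTop (𝓝 0) := by
    rw [tendsto_zero_iff_norm_tendsto_zero]
    have heq : ∀ T : ℝ, ‖Complex.exp (-(c * T))‖ = Real.exp (-(c.re * T)) := by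
      intro T
      rw [Complex.norm_exp]
      congr 1
      simp [Complex.neg_re, Complex.mul_re]
    simp_rw [heq]
    have hm : Tendsto (fun T : ℝ => -(c.re * T)) atTop atBot :=
      tendsto_neg_atTop_atBot.comp ((tendsto_const_mul_atTop_of_pos hc).mpr tendsto_id)
    exact Real.tendsto_exp_atBot.comp hm
  have h2 : Tendsto (fun T : ℝ => (1 - Complex.exp (-(c * T))) / c) atTop (𝓝 ((1 - 0) / c)) :=
    (tendsto_const_nhds.sub h1).div_const c
  refine Tendsto.congr' ?_ (by simpa using h2)
  filter_upwards [eventually_ge_atTop (0:ℝ)] with T hT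
  exact (bInt_eq c hc0 hT).symm

lemma prod_indicator_pi {ι : Type*} [Fintype ι] (S : ι → Set ℝ) (h : ι → ℝ → ℂ) (y : ι → ℝ) :
    (Set.pi Set.univ S).indicator (fun y => ∏ i, h i (y i)) y
      = ∏ i, (S i).indicator (h i) (y i) := by
  by_cases hy : y ∈ Set.pi Set.univ S
  · rw [Set.indicator_of_mem hy]
    exact Finset.prod_congr rfl fun i _ => (Set.indicator_of_mem (hy i (Set.mem_univ i)) _).symm
  · rw [Set.indicator_of_notMem hy]
    simp only [Set.mem_pi, Set.mem_univ, forall_true_left] at hy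
    push_neg at hy
    obtain ⟨i, hi⟩ := hy
    exact (Finset.prod_eq_zero (Finset.mem_univ i) (Set.indicator_of_notMem hi _)).symm

theorem stmt9 (n s : ℕ) (hs : 1 ≤ s) (lam : ℕ → Fin n → ℂ)
    (hre : ∀ k j, 0 < (lam k j).re)
    (J : Fin s → Fin n) (hJ : StrictMono J)
    (huniq : IsMUniquenessFamily n lam) :
    IsMUniquenessFamily s (fun k i => lam k (J i)) := by
  classical
  intro f hfli hfreg hf0
  obtain ⟨ω, hωtop, hωsub, hωlam⟩ := hfreg
  haveI : Nonempty (Fin s) := ⟨⟨0, hs⟩⟩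
  set p : Fin n → Prop := fun i => ∃ j, J j = i with hp
  have hpJ : ∀ j, p (J j) := fun j => ⟨j, rfl⟩
  set e : Fin s ≃ {i // p i} := Equiv.ofInjective J hJ.injective with he
  have he1 : ∀ j, ((e j : {i // p i}) : Fin n) = J j := fun j => rfl
  set φ : (Fin n → ℝ) ≃ᵐ ({i // p i} → ℝ) × ({i // ¬ p i} → ℝ) :=
    MeasurableEquiv.piEquivPiSubtypeProd (fun _ : Fin n => ℝ) p with hφdef
  have hφ : MeasurePreserving φ volume volume :=
    volume_preserving_piEquivPiSubtypeProd (fun _ : Fin n => ℝ) p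
  set ψ : (Fin s → ℝ) ≃ᵐ ({i // p i} → ℝ) :=
    MeasurableEquiv.piCongrLeft (fun _ => ℝ) e with hψdef
  have hψ : MeasurePreserving ψ volume volume :=
    volume_measurePreserving_piCongrLeft (fun _ => ℝ) e
  have hψapp : ∀ (x : Fin s → ℝ) (j : Fin s), ψ x (e j) = x j := fun x j => by
    simp [hψdef, MeasurableEquiv.coe_piCongrLeft, Equiv.piCongrLeft_apply_apply]
  set g : (Fin n → ℝ) → ℂ := fun t =>
    f (fun j => t (J j)) * Complex.exp (-(∑ i : {i // ¬ p i}, ((t i.1 : ℝ) : ℂ))) with hg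
  have hpre : ∀ S : Fin n → Set ℝ,
      Set.pi Set.univ S
        = φ ⁻¹' ((Set.pi Set.univ fun i : {i // p i} => S i.1) ×ˢ
            (Set.pi Set.univ fun i : {i // ¬ p i} => S i.1)) := by
    intro S
    ext x
    simp only [Set.mem_pi, Set.mem_univ, forall_true_left, Set.mem_preimage, Set.mem_prod,
      hφdef, MeasurableEquiv.piEquivPiSubtypeProd, MeasurableEquiv.coe_mk,
      Equiv.piEquivPiSubtypeProd_apply]
    constructor
    · exact fun h => ⟨fun i => h i.1, fun i => h i.1⟩
    · intro h i
      by_cases hi : p i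
      · exact h.1 ⟨i, hi⟩
      · exact h.2 ⟨i, hi⟩
  have hpre2 : ∀ S : Fin n → Set ℝ,
      ψ ⁻¹' (Set.pi Set.univ fun i : {i // p i} => S i.1)
        = Set.pi Set.univ fun j => S (J j) := by
    intro S
    ext x
    simp only [Set.mem_preimage, Set.mem_pi, Set.mem_univ, forall_true_left]
    constructor
    · intro h j
      have := h (e j)
      rwa [hψapp, he1] at this
    · intro h i
      have h2 := h (e.symm i)
      have h3 : ψ x (e (e.symm i)) = x (e.symm i) := hψapp x _
      rw [e.apply_symm_apply] at h3
      rw [h3]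
      have h4 : J (e.symm i) = i.1 := by
        rw [← he1 (e.symm i), e.apply_symm_apply]
      rwa [h4] at h2
  have key : ∀ (l : Fin n → ℂ) (t : Fin n → ℝ),
      mLapPartial n g l t
        = mLapPartial s f (fun j => l (J j)) (fun j => t (J j))
          * ∏ i : {i // ¬ p i}, ∫ u in Set.Ioc (0:ℝ) (t i.1),
              Complex.exp (-((l i.1 + 1) * u)) := by
    intro l t
    set T₁ : Set ({i // p i} → ℝ) := Set.pi Set.univ fun i => Set.Ioc (0:ℝ) (t i.1) with hT₁
    set T₂ : Set ({i // ¬ p i} → ℝ) := Set.pi Set.univ fun i => Set.Ioc (0:ℝ) (t i.1) with hT₂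
    set A : ({i // p i} → ℝ) → ℂ := fun y =>
      Complex.exp (-(∑ j, l (J j) * (y (e j) : ℂ))) * f (fun j => y (e j)) with hA
    set B : ({i // ¬ p i} → ℝ) → ℂ := fun y =>
      ∏ i : {i // ¬ p i}, Complex.exp (-((l i.1 + 1) * (y i : ℂ))) with hB
    have hsplit : ∀ x : Fin n → ℝ,
        (∑ i, l i * ((x i : ℝ) : ℂ))
          = (∑ j, l (J j) * ((x (J j) : ℝ) : ℂ))
            + ∑ i : {i // ¬ p i}, l i.1 * ((x i.1 : ℝ) : ℂ) := by
      intro x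
      rw [← Fintype.sum_subtype_add_sum_subtype p (fun i => l i * ((x i : ℝ) : ℂ))]
      congr 1
      rw [← Equiv.sum_comp e (fun i : {i // p i} => l i.1 * ((x i.1 : ℝ) : ℂ))]
      exact Finset.sum_congr rfl fun j _ => by rw [he1]
    have hpt : ∀ x : Fin n → ℝ,
        Complex.exp (-(∑ i, l i * ((x i : ℝ) : ℂ))) * g x = A (φ x).1 * B (φ x).2 := by
      intro x
      have hφ1 : (φ x).1 = fun i : {i // p i} => x i.1 := rfl
      have hφ2 : (φ x).2 = fun i : {i // ¬ p i} => x i.1 := rfl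
      rw [hφ1, hφ2, hA, hB, hg]
      simp only
      calc Complex.exp (-(∑ i, l i * ((x i : ℝ) : ℂ)))
            * (f (fun j => x (J j)) * Complex.exp (-(∑ i : {i // ¬ p i}, ((x i.1 : ℝ) : ℂ))))
          = f (fun j => x (J j)) * Complex.exp ((-(∑ i, l i * ((x i : ℝ) : ℂ)))
              + (-(∑ i : {i // ¬ p i}, ((x i.1 : ℝ) : ℂ)))) := by
            rw [Complex.exp_add]; ring
        _ = f (fun j => x (J j)) * Complex.exp ((-(∑ j, l (J j) * ((x (J j) : ℝ) : ℂ)))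
              + (∑ i : {i // ¬ p i}, -((l i.1 + 1) * ((x i.1 : ℝ) : ℂ)))) := by
            congr 1
            have h5 : ∀ i ∈ (Finset.univ : Finset {i // ¬ p i}),
                -((l i.1 + 1) * ((x i.1 : ℝ) : ℂ))
                  = -(l i.1 * ((x i.1 : ℝ) : ℂ)) + -(((x i.1 : ℝ) : ℂ)) := fun i _ => by ring
            rw [Finset.sum_congr rfl h5, Finset.sum_add_distrib, Finset.sum_neg_distrib,
              Finset.sum_neg_distrib, hsplit x]
            ring
        _ = (Complex.exp (-(∑ j, l (J j) * ((x (J j) : ℝ) : ℂ))) * f (fun j => x (J j)))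
              * ∏ i : {i // ¬ p i}, Complex.exp (-((l i.1 + 1) * ((x i.1 : ℝ) : ℂ))) := by
            rw [← Complex.exp_sum, Complex.exp_add]; ring
    calc mLapPartial n g l t
        = ∫ x in Set.pi Set.univ fun i => Set.Ioc (0:ℝ) (t i), A (φ x).1 * B (φ x).2 := by
          rw [mLapPartial]
          exact integral_congr_ae (Filter.Eventually.of_forall fun x => hpt x)
      _ = ∫ z in T₁ ×ˢ T₂, A z.1 * B z.2 := by
          rw [hpre (fun i => Set.Ioc (0:ℝ) (t i))]
          exact hφ.setIntegral_preimage_emb φ.measurableEmbedding (fun z => A z.1 * B z.2) _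
      _ = (∫ y in T₁, A y) * (∫ y in T₂, B y) := by
          rw [Measure.volume_eq_prod _ _, ← Measure.prod_restrict, integral_prod_mul]
      _ = mLapPartial s f (fun j => l (J j)) (fun j => t (J j))
            * ∏ i : {i // ¬ p i}, ∫ u in Set.Ioc (0:ℝ) (t i.1),
                Complex.exp (-((l i.1 + 1) * u)) := by
          congr 1
          · rw [← hψ.setIntegral_preimage_emb ψ.measurableEmbedding A T₁, hT₁,
              hpre2 (fun i => Set.Ioc (0:ℝ) (t i)), mLapPartial]
            refine integral_congr_ae (Filter.Eventually.of_forall fun x => ?_)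
            rw [hA]
            simp only [hψapp]
          · rw [← integral_indicator (MeasurableSet.univ_pi fun i => measurableSet_Ioc)]
            have hind : ∀ y, T₂.indicator B y
                = ∏ i : {i // ¬ p i}, (Set.Ioc (0:ℝ) (t i.1)).indicator
                    (fun u => Complex.exp (-((l i.1 + 1) * u))) (y i) := fun y => by
              rw [hT₂, hB]
              exact prod_indicator_pi (fun i : {i // ¬ p i} => Set.Ioc (0:ℝ) (t i.1))
                (fun i u => Complex.exp (-((l i.1 + 1) * u))) y
            rw [integral_congr_ae (Filter.Eventually.of_forall hind)]
            rw [volume_pi, MeasureTheory.integral_fintype_prod_eq_prod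
              (f := fun (i : {i // ¬ p i}) => (Set.Ioc (0:ℝ) (t i.1)).indicator
                (fun u => Complex.exp (-((l i.1 + 1) * u))))]
            exact Finset.prod_congr rfl fun i _ => integral_indicator measurableSet_Ioc
  have hti : ∀ i : Fin n, Tendsto (fun t : Fin n → ℝ => t i) atTop atTop := by
    intro i
    rw [tendsto_atTop]
    intro b
    filter_upwards [eventually_ge_atTop (fun _ : Fin n => b)] with t ht
    exact Pi.le_def.mp ht i
  have htJ : Tendsto (fun t : Fin n → ℝ => fun j => t (J j)) atTop atTop := by
    rw [tendsto_atTop]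
    intro b
    filter_upwards [eventually_ge_atTop
      (fun _ : Fin n => Finset.univ.sup' Finset.univ_nonempty b)] with t ht
    intro j
    exact le_trans (Finset.le_sup' b (Finset.mem_univ j)) (Pi.le_def.mp ht (J j))
  have hlim : ∀ (l : Fin n → ℂ) (F : ℂ),
      (∀ i : {i // ¬ p i}, 0 < (l i.1).re + 1) →
      HasMLaplace s f (fun j => l (J j)) F →
      HasMLaplace n g l (F * ∏ i : {i // ¬ p i}, 1 / (l i.1 + 1)) := by
    intro l F hlre hF
    rw [HasMLaplace]
    have heq : (mLapPartial n g l) = fun t => mLapPartial s f (fun j => l (J j)) (fun j => t (J j))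
        * ∏ i : {i // ¬ p i}, ∫ u in Set.Ioc (0:ℝ) (t i.1), Complex.exp (-((l i.1 + 1) * u)) :=
      funext fun t => key l t
    rw [heq]
    refine Tendsto.mul (hF.comp htJ) (tendsto_finset_prod Finset.univ fun i _ => ?_)
    have hre2 : 0 < (l i.1 + 1).re := by
      simp only [Complex.add_re, Complex.one_re]
      linarith [hlre i]
    exact (bInt_tendsto (l i.1 + 1) hre2).comp (hti i.1)
  have hbd : ∀ l : Fin n → ℂ,
      (∀ i : {i // ¬ p i}, 0 < (l i.1).re + 1) →
      Bornology.IsBounded (mLapPartial s f (fun j => l (J j)) '' {t | ∀ i, 0 ≤ t i}) →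
      Bornology.IsBounded (mLapPartial n g l '' {t | ∀ i, 0 ≤ t i}) := by
    intro l hlre hb
    rw [isBounded_iff_forall_norm_le] at hb ⊢
    obtain ⟨C, hC⟩ := hb
    have hC0 : 0 ≤ C := by
      refine le_trans (norm_nonneg (mLapPartial s f (fun j => l (J j)) (fun _ => 0))) (hC _ ?_)
      exact ⟨fun _ => 0, fun i => le_refl 0, rfl⟩
    refine ⟨C * ∏ i : {i // ¬ p i}, 2 / ‖l i.1 + 1‖, ?_⟩
    rintro - ⟨t, ht, rfl⟩
    rw [key l t, norm_mul]
    have h1 : ‖mLapPartial s f (fun j => l (J j)) (fun j => t (J j))‖ ≤ C :=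
      hC _ ⟨fun j => t (J j), fun j => ht (J j), rfl⟩
    have h2 : ‖∏ i : {i // ¬ p i}, ∫ u in Set.Ioc (0:ℝ) (t i.1),
        Complex.exp (-((l i.1 + 1) * u))‖ ≤ ∏ i : {i // ¬ p i}, 2 / ‖l i.1 + 1‖ := by
      rw [norm_prod]
      refine Finset.prod_le_prod (fun i _ => norm_nonneg _) fun i _ => ?_
      refine bInt_norm_le (l i.1 + 1) ?_ (t i.1)
      simp only [Complex.add_re, Complex.one_re]
      linarith [hlre i]
    exact mul_le_mul h1 h2 (norm_nonneg _) hC0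
  have horth : {t : Fin n → ℝ | ∀ i, 0 ≤ t i}
      = Set.pi Set.univ fun _ : Fin n => Set.Ici (0:ℝ) := by
    ext t
    constructor
    · intro h i _; exact h i
    · intro h i; exact h i (Set.mem_univ i)
  have hgli : LocallyIntegrableOn g {t : Fin n → ℝ | ∀ i, 0 ≤ t i} volume := by
    rw [locallyIntegrableOn_iff]
    swap
    · rw [horth]; exact (isClosed_set_pi fun i _ => isClosed_Ici).isLocallyClosed
    intro K hK hKc
    obtain ⟨R, hR0, hRK⟩ : ∃ R : ℝ, 0 ≤ R ∧ K ⊆ Metric.closedBall 0 R := by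
      obtain ⟨R, hR⟩ := hKc.isBounded.subset_closedBall (0 : Fin n → ℝ)
      exact ⟨max R 0, le_max_right _ _,
        hR.trans (Metric.closedBall_subset_closedBall (le_max_left _ _))⟩
    have hKbox : K ⊆ Set.pi Set.univ fun _ : Fin n => Set.Icc (0:ℝ) R := by
      intro x hx i _
      refine ⟨hK hx i, ?_⟩
      have h2 : dist (x i) 0 ≤ R :=
        le_trans (dist_le_pi_dist x 0 i) (Metric.mem_closedBall.mp (hRK hx))
      rw [Real.dist_eq, sub_zero] at h2
      exact le_trans (le_abs_self _) h2
    refine IntegrableOn.mono_set ?_ hKbox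
    rw [IntegrableOn, hpre (fun _ => Set.Icc (0:ℝ) R)]
    have hmeas : MeasurableSet ((Set.pi Set.univ fun i : {i // p i} => Set.Icc (0:ℝ) R) ×ˢ
        (Set.pi Set.univ fun i : {i // ¬ p i} => Set.Icc (0:ℝ) R)) :=
      (MeasurableSet.univ_pi fun i => measurableSet_Icc).prod
        (MeasurableSet.univ_pi fun i => measurableSet_Icc)
    have hmp := hφ.restrict_preimage hmeas
    have hcomp : g = (fun z : ({i // p i} → ℝ) × ({i // ¬ p i} → ℝ) =>
        f (fun j => z.1 (e j)) * Complex.exp (-(∑ i : {i // ¬ p i}, ((z.2 i : ℝ) : ℂ)))) ∘ φ := by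
      funext x
      rfl
    rw [hcomp, hmp.integrable_comp_emb φ.measurableEmbedding]
    rw [Measure.volume_eq_prod _ _, ← Measure.prod_restrict]
    refine Integrable.mul_prod (f := fun y : {i // p i} → ℝ => f (fun j => y (e j)))
      (g := fun y : {i // ¬ p i} → ℝ =>
        Complex.exp (-(∑ i : {i // ¬ p i}, ((y i : ℝ) : ℂ)))) ?_ ?_
    · have hmp2 := hψ.restrict_preimage
        (s := Set.pi Set.univ fun i : {i // p i} => Set.Icc (0:ℝ) R)
        (MeasurableSet.univ_pi fun i => measurableSet_Icc)
      rw [← hmp2.integrable_comp_emb ψ.measurableEmbedding]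
      have hcomp2 : ((fun y : {i // p i} → ℝ => f (fun j => y (e j))) ∘ ψ) = f := by
        funext x; simp only [Function.comp_apply, hψapp]
      rw [hcomp2, hpre2 (fun _ => Set.Icc (0:ℝ) R)]
      refine hfli.integrableOn_compact_subset ?_ (isCompact_univ_pi fun j => isCompact_Icc)
      intro x hx j
      exact (hx j (Set.mem_univ j)).1
    · refine ContinuousOn.integrableOn_compact (isCompact_univ_pi fun i => isCompact_Icc) ?_
      refine Continuous.continuousOn ?_
      refine Complex.continuous_exp.comp (Continuous.neg ?_)
      refine continuous_finset_sum _ fun i _ => ?_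
      exact Complex.continuous_ofReal.comp (continuous_apply i)
  set ω' : Fin n → EReal := fun i => if h : p i then ω (e.symm ⟨i, h⟩) else ((-1 : ℝ) : EReal)
    with hω'
  have hω'J : ∀ j, ω' (J j) = ω j := by
    intro j
    rw [hω']
    simp only
    rw [dif_pos (hpJ j)]
    congr 1
    have h6 : (⟨J j, hpJ j⟩ : {i // p i}) = e j := Subtype.ext (he1 j).symm
    rw [h6, Equiv.symm_apply_apply]
  have hω'np : ∀ (i : Fin n), ¬ p i → ω' i = ((-1 : ℝ) : EReal) := by
    intro i hi; rw [hω']; simp only; rw [dif_neg hi]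
  have hreg' : ∃ ω'' : Fin n → EReal, (∀ j, ω'' j ≠ ⊤) ∧
      {l : Fin n → ℂ | ∀ j, ω'' j < (((l j).re : ℝ) : EReal)} ⊆ mOmegaB n g ∩ mOmega n g ∧
      ∀ k j, ω'' j < ((((lam k j).re : ℝ)) : EReal) := by
    refine ⟨ω', ?_, ?_, ?_⟩
    · intro i
      rw [hω']; simp only
      by_cases hi : p i
      · rw [dif_pos hi]; exact hωtop _
      · rw [dif_neg hi]; exact EReal.coe_ne_top _
    · intro l hl
      have hlre : ∀ i : {i // ¬ p i}, 0 < (l i.1).re + 1 := by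
        intro i
        have h7 := hl i.1
        rw [hω'np i.1 i.2] at h7
        have h8 : (-1 : ℝ) < (l i.1).re := by exact_mod_cast h7
        linarith
      have hlJ : (fun j => l (J j)) ∈ {l' : Fin s → ℂ | ∀ j, ω j < (((l' j).re : ℝ) : EReal)} := by
        intro j
        have h9 := hl (J j)
        rwa [hω'J j] at h9
      obtain ⟨hbJ, FJ, hFJ⟩ := hωsub hlJ
      exact ⟨hbd l hlre hbJ, ⟨_, hlim l FJ hlre hFJ⟩⟩
    · intro k i
      rw [hω']; simp only
      by_cases hi : p i
      · rw [dif_pos hi]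
        have h8 : J (e.symm ⟨i, hi⟩) = i := by
          rw [← he1 (e.symm ⟨i, hi⟩), e.apply_symm_apply]
        have h9 := hωlam k (e.symm ⟨i, hi⟩)
        simpa [h8] using h9
      · rw [dif_neg hi]
        have h10 : (-1 : ℝ) < (lam k i).re := by linarith [hre k i]
        exact_mod_cast h10
  have hzero : ∀ k, HasMLaplace n g (lam k) 0 := by
    intro k
    have hlre : ∀ i : {i // ¬ p i}, 0 < (lam k i.1).re + 1 := fun i => by linarith [hre k i.1]
    have h11 := hlim (lam k) 0 hlre (hf0 k)
    simpa using h11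
  have hg0 := huniq g hgli hreg' hzero
  have hφs : MeasurePreserving (φ.symm) volume volume := hφ.symm
  have h9 : ∀ᵐ z : ({i // p i} → ℝ) × ({i // ¬ p i} → ℝ),
      (∀ i, 0 ≤ φ.symm z i) → g (φ.symm z) = 0 :=
    hφs.quasiMeasurePreserving.ae hg0
  rw [Measure.volume_eq_prod _ _] at h9
  have h10 := Measure.ae_ae_of_ae_prod h9
  have h11 : ∀ᵐ x : {i // p i} → ℝ, (∀ i, 0 ≤ x i) → f (fun j => x (e j)) = 0 := by
    filter_upwards [h10] with x hx hx0
    by_contra hfx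
    have h12 : ∀ᵐ y : {i // ¬ p i} → ℝ, ¬ (∀ i, 0 ≤ y i) := by
      filter_upwards [hx] with y hy hy0
      apply hfx
      have hpos : ∀ i : Fin n, 0 ≤ φ.symm (x, y) i := by
        intro i
        have hsymm : φ.symm (x, y) i = if h : p i then x ⟨i, h⟩ else y ⟨i, h⟩ := rfl
        rw [hsymm]
        by_cases hi : p i
        · rw [dif_pos hi]; exact hx0 ⟨i, hi⟩
        · rw [dif_neg hi]; exact hy0 ⟨i, hi⟩
      have h13 := hy hpos
      rw [hg] at h13
      simp only at h13
      have h14 : (fun j => φ.symm (x, y) (J j)) = fun j => x (e j) := by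
        funext j
        have h15 : φ.symm (x, y) (J j) = if h : p (J j) then x ⟨J j, h⟩ else y ⟨J j, h⟩ := rfl
        rw [h15, dif_pos (hpJ j)]
        congr 1
      rw [h14] at h13
      rcases mul_eq_zero.mp h13 with h | h
      · exact h
      · exact absurd h (Complex.exp_ne_zero _)
    have h15 : (volume : Measure ({i // ¬ p i} → ℝ)) {y | ∀ i, 0 ≤ y i} = 0 := by
      have h16 := (ae_iff.mp h12)
      exact measure_mono_null (fun y hy => not_not_intro hy) h16
    have h17 : (1 : ENNReal) ≤ 0 := by
      calc (1 : ENNReal)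
          = (volume : Measure ({i // ¬ p i} → ℝ))
              (Set.pi Set.univ fun _ => Set.Icc (0:ℝ) 1) := by
            rw [volume_pi_pi]; simp [Real.volume_Icc]
        _ ≤ 0 := h15 ▸ measure_mono (fun y hy i => (hy i (Set.mem_univ i)).1)
    simp at h17
  have h18 := hψ.quasiMeasurePreserving.ae h11
  filter_upwards [h18] with u hu hu0
  have h19 : ∀ i : {i // p i}, 0 ≤ ψ u i := by
    intro i
    have h20 : ψ u (e (e.symm i)) = u (e.symm i) := hψapp u _
    rw [e.apply_symm_apply] at h20
    rw [h20]
    exact hu0 _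
  have h21 := hu h19
  have h22 : (fun j => ψ u (e j)) = u := funext fun j => hψapp u j
  rwa [h22] at h21

end
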